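/- Let Γ be a countable discrete amenable group acting on a compact Hausdorff space X and A ⊆ X a closed set. Then D̄(A) = sup_{μ ∈ M_Γ(X)} μ(A), where D̄ is the upper Banach density. -/

import Mathlib

open MeasureTheory

open Classical in
/-- The average of `1_A` along the partial orbit `F • x`. -/
noncomputable def orbitAvg {Γ X : Type*} [Group Γ] [MulAction Γ X]
    (F : Finset Γ) (A : Set X) (x : X) : ℝ :=
  ((F.card : ℝ))⁻¹ * (F.sum fun s => if s • x ∈ A then (1 : ℝ) else 0)

/-- The upper Banach density of `A ⊆ X` with respect to the action of `Γ`: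
`D̄(A) = inf over finite nonempty F ⊆ Γ of sup_x (1/|F|) Σ_{s ∈ F} 1_A(sx)`. -/
noncomputable def upperBanachDensity (Γ : Type*) {X : Type*} [Group Γ] [MulAction Γ X]
    (A : Set X) : ℝ :=
  sInf {v : ℝ | ∃ F : Finset Γ, F.Nonempty ∧ v = ⨆ x : X, orbitAvg F A x}

/-- `μ` is a `Γ`-invariant Borel probability measure. -/
def IsInvariantProbMeasure (Γ : Type*) {X : Type*} [Group Γ] [MulAction Γ X]
    [MeasurableSpace X] (μ : Measure X) : Prop :=
  IsProbabilityMeasure μ ∧ ∀ γ : Γ, Measure.map (fun x : X => γ • x) μ = μ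

/-- A Følner sequence of finite sets in a group. -/
def IsFolnerSeqGroup {Γ : Type*} [Group Γ] [DecidableEq Γ] (F : ℕ → Finset Γ) : Prop :=
  (∀ n, (F n).Nonempty) ∧
  ∀ γ : Γ, Filter.Tendsto
    (fun n => (((symmDiff ((F n).image (fun s => γ * s)) (F n)).card : ℝ)) / ((F n).card : ℝ))
    Filter.atTop (nhds 0)

section Easy
variable {Γ X : Type*} [Group Γ] [MulAction Γ X]

open Classical in
lemma orbitAvg_nonneg (F : Finset Γ) (A : Set X) (x : X) : 0 ≤ orbitAvg F A x := by
  unfold orbitAvg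
  apply mul_nonneg (by positivity)
  apply Finset.sum_nonneg
  intro s _
  split <;> norm_num

open Classical in
lemma orbitAvg_le_one (F : Finset Γ) (A : Set X) (x : X) : orbitAvg F A x ≤ 1 := by
  unfold orbitAvg
  rcases Finset.eq_empty_or_nonempty F with h | h
  · simp [h]
  · have hc : (0:ℝ) < F.card := by exact_mod_cast Finset.card_pos.2 h
    rw [inv_mul_le_iff₀ hc, mul_one]
    calc (F.sum fun s => if s • x ∈ A then (1:ℝ) else 0) ≤ F.sum fun _ => (1:ℝ) := by
          apply Finset.sum_le_sum; intro s _; split <;> norm_num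
      _ = F.card := by simp

lemma bddAbove_orbitAvg (F : Finset Γ) (A : Set X) :
    BddAbove (Set.range fun x : X => orbitAvg F A x) :=
  ⟨1, by rintro v ⟨x, rfl⟩; exact orbitAvg_le_one F A x⟩

lemma iSup_orbitAvg_nonneg (F : Finset Γ) (A : Set X) :
    0 ≤ ⨆ x : X, orbitAvg F A x := by
  rcases isEmpty_or_nonempty X with h | h
  · simp [Real.iSup_of_isEmpty]
  · obtain ⟨x⟩ := h
    exact le_trans (orbitAvg_nonneg F A x) (le_ciSup (bddAbove_orbitAvg F A) x)

lemma upperBanachDensity_nonneg (A : Set X) : 0 ≤ upperBanachDensity Γ A := by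
  apply Real.sInf_nonneg
  rintro v ⟨F, hF, rfl⟩
  exact iSup_orbitAvg_nonneg F A

variable [TopologicalSpace X] [MeasurableSpace X] [BorelSpace X]

open Classical in
/-- key easy-direction computation -/
lemma measure_le_iSup_orbitAvg (hact : ∀ γ : Γ, Continuous fun x : X => γ • x)
    {μ : Measure X} (hμ : IsInvariantProbMeasure Γ μ)
    {A : Set X} (hA : IsClosed A) {F : Finset Γ} (hF : F.Nonempty) :
    (μ A).toReal ≤ ⨆ x : X, orbitAvg F A x := by
  obtain ⟨hprob, hinv⟩ := hμ
  haveI := hprob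
  have hXne : Nonempty X := by
    by_contra h
    rw [not_nonempty_iff] at h
    have := hprob.measure_univ
    simp [Set.univ_eq_empty_iff.2 h] at this
  have hAm : MeasurableSet A := hA.measurableSet
  have hmeas : ∀ s : Γ, Measurable (fun x : X => s • x) := fun s => (hact s).measurable
  -- each indicator integrates to μ A
  have hint : ∀ s : Γ, ∫ x, (if s • x ∈ A then (1:ℝ) else 0) ∂μ = (μ A).toReal := by
    intro s
    have hpre : MeasurableSet ((fun x : X => s • x) ⁻¹' A) := hmeas s hAm
    have : (fun x : X => if s • x ∈ A then (1:ℝ) else 0)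
        = Set.indicator ((fun x : X => s • x) ⁻¹' A) (fun _ => (1:ℝ)) := by
      ext x; by_cases h : s • x ∈ A <;> simp [Set.indicator, h]
    rw [this, integral_indicator hpre]
    rw [setIntegral_const]
    have : μ ((fun x : X => s • x) ⁻¹' A) = μ A := by
      conv_rhs => rw [← hinv s]
      rw [Measure.map_apply (hmeas s) hAm]
    rw [measureReal_def, this]; simp
  have hintegrable : ∀ s : Γ, Integrable (fun x : X => if s • x ∈ A then (1:ℝ) else 0) μ := by
    intro s
    have hpre : MeasurableSet ((fun x : X => s • x) ⁻¹' A) := hmeas s hAm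
    have : (fun x : X => if s • x ∈ A then (1:ℝ) else 0)
        = Set.indicator ((fun x : X => s • x) ⁻¹' A) (fun _ => (1:ℝ)) := by
      ext x; by_cases h : s • x ∈ A <;> simp [Set.indicator, h]
    rw [this]
    exact (integrable_const (1:ℝ)).indicator hpre
  have hgint : Integrable (fun x => orbitAvg F A x) μ := by
    unfold orbitAvg
    exact (integrable_finset_sum F (fun s _ => hintegrable s)).const_mul _
  have h1 : ∫ x, orbitAvg F A x ∂μ = (μ A).toReal := by
    unfold orbitAvg
    rw [MeasureTheory.integral_const_mul, integral_finset_sum F (fun s _ => hintegrable s)]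
    rw [Finset.sum_congr rfl (fun s _ => hint s)]
    rw [Finset.sum_const, nsmul_eq_mul]
    have hc : (F.card : ℝ) ≠ 0 := by exact_mod_cast Finset.card_ne_zero_of_mem hF.choose_spec
    field_simp
  calc (μ A).toReal = ∫ x, orbitAvg F A x ∂μ := h1.symm
    _ ≤ ∫ _, (⨆ x : X, orbitAvg F A x) ∂μ := by
        apply integral_mono hgint (integrable_const _)
        intro x
        exact le_ciSup (bddAbove_orbitAvg F A) x
    _ = ⨆ x : X, orbitAvg F A x := by simp
end Easy


open MeasureTheory TopologicalSpace
open scoped ENNReal NNReal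

namespace UBDAux

variable {X : Type*} [TopologicalSpace X] [CompactSpace X] [T2Space X]

/-- A normalized positive invariant-to-be linear functional on `C(X, ℝ)`. -/
structure IsPosFunctional (L : C(X, ℝ) → ℝ) : Prop where
  add : ∀ f g : C(X, ℝ), L (f + g) = L f + L g
  smul : ∀ (c : ℝ) (f : C(X, ℝ)), L (c • f) = c * L f
  mono : ∀ f g : C(X, ℝ), (∀ x, f x ≤ g x) → L f ≤ L g
  one : L 1 = 1

/-- The set of values of `L` on functions dominating the indicator of `K`. -/
def adm (L : C(X, ℝ) → ℝ) (K : Set X) : Set ℝ :=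
  {r | ∃ f : C(X, ℝ), (∀ x, 0 ≤ f x) ∧ (∀ x ∈ K, 1 ≤ f x) ∧ r = L f}

/-- The Riesz content associated to `L`. -/
noncomputable def rc (L : C(X, ℝ) → ℝ) (K : Set X) : ℝ := sInf (adm L K)

variable {L : C(X, ℝ) → ℝ}

lemma IsPosFunctional.zero (hL : IsPosFunctional L) : L 0 = 0 := by
  have := hL.smul 0 0
  simpa using this

lemma IsPosFunctional.nonneg (hL : IsPosFunctional L) {f : C(X, ℝ)} (hf : ∀ x, 0 ≤ f x) :
    0 ≤ L f := by
  have := hL.mono 0 f (by simpa using hf)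
  rwa [hL.zero] at this

lemma adm_nonempty (L : C(X, ℝ) → ℝ) (K : Set X) : (adm L K).Nonempty :=
  ⟨L 1, 1, fun x => by norm_num, fun x _ => by norm_num, rfl⟩

lemma adm_bddBelow (hL : IsPosFunctional L) (K : Set X) : ∀ r ∈ adm L K, (0:ℝ) ≤ r := by
  rintro r ⟨f, hf0, _, rfl⟩
  exact hL.nonneg hf0

lemma rc_nonneg (hL : IsPosFunctional L) (K : Set X) : 0 ≤ rc L K :=
  Real.sInf_nonneg (adm_bddBelow hL K)

lemma rc_le (hL : IsPosFunctional L) {K : Set X} {f : C(X, ℝ)} (hf0 : ∀ x, 0 ≤ f x)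
    (hf1 : ∀ x ∈ K, 1 ≤ f x) : rc L K ≤ L f :=
  csInf_le ⟨0, adm_bddBelow hL K⟩ ⟨f, hf0, hf1, rfl⟩

lemma le_rc (c : ℝ) {K : Set X}
    (h : ∀ f : C(X, ℝ), (∀ x, 0 ≤ f x) → (∀ x ∈ K, 1 ≤ f x) → c ≤ L f) : c ≤ rc L K := by
  apply le_csInf (adm_nonempty L K)
  rintro r ⟨f, hf0, hf1, rfl⟩
  exact h f hf0 hf1

lemma rc_mono (hL : IsPosFunctional L) {K₁ K₂ : Set X} (h : K₁ ⊆ K₂) : rc L K₁ ≤ rc L K₂ :=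
  csInf_le_csInf ⟨0, adm_bddBelow hL K₁⟩ (adm_nonempty L K₂)
    (by rintro r ⟨f, hf0, hf1, rfl⟩; exact ⟨f, hf0, fun x hx => hf1 x (h hx), rfl⟩)

lemma rc_univ (hL : IsPosFunctional L) : rc L (Set.univ : Set X) = 1 := by
  apply le_antisymm
  · have := rc_le hL (K := (Set.univ : Set X)) (f := 1) (fun x => by norm_num)
      (fun x _ => by norm_num)
    rwa [hL.one] at this
  · apply le_rc
    intro f hf0 hf1
    have := hL.mono 1 f (fun x => by simpa using hf1 x trivial)
    rwa [hL.one] at this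

lemma rc_le_one (hL : IsPosFunctional L) (K : Set X) : rc L K ≤ 1 := by
  rw [← rc_univ hL (X := X)]
  exact rc_mono hL (Set.subset_univ K)

lemma rc_union_le (hL : IsPosFunctional L) (K₁ K₂ : Set X) :
    rc L (K₁ ∪ K₂) ≤ rc L K₁ + rc L K₂ := by
  have key : ∀ a ∈ adm L K₁, ∀ b ∈ adm L K₂, rc L (K₁ ∪ K₂) ≤ a + b := by
    rintro a ⟨f, hf0, hf1, rfl⟩ b ⟨g, hg0, hg1, rfl⟩
    rw [← hL.add]
    apply rc_le hL
    · intro x; have := hf0 x; have := hg0 x; simp only [ContinuousMap.add_apply]; linarith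
    · rintro x (hx | hx)
      · have := hf1 x hx; have := hg0 x; simp only [ContinuousMap.add_apply]; linarith
      · have := hg1 x hx; have := hf0 x; simp only [ContinuousMap.add_apply]; linarith
  have h1 : ∀ a ∈ adm L K₁, rc L (K₁ ∪ K₂) ≤ a + rc L K₂ := by
    intro a ha
    have : rc L (K₁ ∪ K₂) - a ≤ rc L K₂ := by
      apply le_csInf (adm_nonempty L K₂)
      intro b hb
      linarith [key a ha b hb]
    linarith
  have : rc L (K₁ ∪ K₂) - rc L K₂ ≤ rc L K₁ := by
    apply le_csInf (adm_nonempty L K₁)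
    intro a ha
    linarith [h1 a ha]
  linarith

lemma rc_add_le_of_disjoint (hL : IsPosFunctional L) {K₁ K₂ : Set X}
    (h₁ : IsCompact K₁) (h₂ : IsCompact K₂) (hd : Disjoint K₁ K₂) :
    rc L K₁ + rc L K₂ ≤ rc L (K₁ ∪ K₂) := by
  apply le_rc
  intro f hf0 hf1
  obtain ⟨g, hg1, hg2, hg01⟩ :=
    exists_continuous_zero_one_of_isClosed h₁.isClosed h₂.isClosed hd
  -- g = 0 on K₁, g = 1 on K₂, 0 ≤ g ≤ 1
  have hA : rc L K₁ ≤ L ((1 - g) * f) := by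
    apply rc_le hL
    · intro x
      have h1 := (hg01 x).1; have h2 := (hg01 x).2; have h3 := hf0 x
      simp only [ContinuousMap.mul_apply, ContinuousMap.sub_apply, ContinuousMap.one_apply]
      nlinarith
    · intro x hx
      have hgx : g x = 0 := by simpa using hg1 hx
      have h3 := hf1 x (Or.inl hx)
      simp only [ContinuousMap.mul_apply, ContinuousMap.sub_apply, ContinuousMap.one_apply, hgx]
      linarith
  have hB : rc L K₂ ≤ L (g * f) := by
    apply rc_le hL
    · intro x
      have h1 := (hg01 x).1; have h3 := hf0 x
      simp only [ContinuousMap.mul_apply]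
      nlinarith
    · intro x hx
      have hgx : g x = 1 := by simpa using hg2 hx
      have h3 := hf1 x (Or.inr hx)
      simp only [ContinuousMap.mul_apply, hgx]
      linarith
  have hsum : (1 - g) * f + g * f = f := by ext x; simp; ring
  calc rc L K₁ + rc L K₂ ≤ L ((1 - g) * f) + L (g * f) := add_le_add hA hB
    _ = L ((1 - g) * f + g * f) := (hL.add _ _).symm
    _ = L f := by rw [hsum]


/-- The content associated to a positive normalized functional. -/
noncomputable def LContent (L : C(X, ℝ) → ℝ) (hL : IsPosFunctional L) : Content X where
  toFun K := (rc L K).toNNReal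
  mono' K₁ K₂ h := Real.toNNReal_mono (rc_mono hL h)
  sup_disjoint' K₁ K₂ hd _ _ := by
    have h1 : rc L ((K₁ ⊔ K₂ : Compacts X) : Set X) = rc L K₁ + rc L K₂ := by
      have hc : ((K₁ ⊔ K₂ : Compacts X) : Set X) = (K₁ : Set X) ∪ K₂ := rfl
      rw [hc]
      exact le_antisymm (rc_union_le hL _ _)
        (rc_add_le_of_disjoint hL K₁.isCompact K₂.isCompact hd)
    simp only [h1]
    rw [Real.toNNReal_add (rc_nonneg hL _) (rc_nonneg hL _)]
  sup_le' K₁ K₂ := by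
    have hc : ((K₁ ⊔ K₂ : Compacts X) : Set X) = (K₁ : Set X) ∪ K₂ := rfl
    simp only [hc]
    calc (rc L ((K₁ : Set X) ∪ K₂)).toNNReal
        ≤ (rc L K₁ + rc L K₂).toNNReal := Real.toNNReal_mono (rc_union_le hL _ _)
      _ = (rc L K₁).toNNReal + (rc L K₂).toNNReal :=
          Real.toNNReal_add (rc_nonneg hL _) (rc_nonneg hL _)

lemma LContent_regular (L : C(X, ℝ) → ℝ) (hL : IsPosFunctional L) :
    (LContent L hL).ContentRegular := by
  intro K
  apply le_antisymm
  · apply le_iInf₂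
    intro K' hK'
    exact ENNReal.coe_le_coe.2 (Real.toNNReal_mono
      (rc_mono hL (hK'.trans interior_subset)))
  · -- find good compact neighborhoods
    apply ENNReal.le_of_forall_pos_le_add
    intro ε hε _
    set εr : ℝ := min (ε : ℝ) 1 with hεr
    have hεr0 : 0 < εr := lt_min (by exact_mod_cast hε) one_pos
    have hεr1 : εr ≤ 1 := min_le_right _ _
    -- pick f with L f < rc L K + εr/4
    obtain ⟨r, ⟨f, hf0, hf1, rfl⟩, hfr⟩ :=
      Real.lt_sInf_add_pos (adm_nonempty L K) (show 0 < εr/4 by linarith)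
    set c : ℝ := 1 + εr/4 with hc
    have hc1 : 1 < c := by rw [hc]; linarith
    have hc0 : 0 < c := by linarith
    set K' : Set X := (⇑f) ⁻¹' (Set.Ici c⁻¹) with hK'
    have hK'closed : IsClosed K' := (isClosed_Ici).preimage f.continuous
    have hK'comp : IsCompact K' := hK'closed.isCompact
    refine le_trans (iInf₂_le ⟨K', hK'comp⟩ ?_) ?_
    · -- K ⊆ interior K'
      intro x hx
      have h1 : x ∈ (⇑f) ⁻¹' (Set.Ioi c⁻¹) := by
        have : 1 ≤ f x := hf1 x hx
        have : c⁻¹ < 1 := by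
          rw [inv_lt_one_iff₀]; right; exact hc1
        simp only [Set.mem_preimage, Set.mem_Ioi]
        linarith [hf1 x hx]
      have hopen : IsOpen ((⇑f) ⁻¹' (Set.Ioi c⁻¹)) := (isOpen_Ioi).preimage f.continuous
      have hsub : (⇑f) ⁻¹' (Set.Ioi c⁻¹) ⊆ K' :=
        Set.preimage_mono Set.Ioi_subset_Ici_self
      exact interior_maximal hsub hopen h1
    · -- content K' ≤ content K + ε
      have hrc : rc L K' ≤ c * L f := by
        have : rc L K' ≤ L (c • f) := by
          apply rc_le hL
          · intro x
            have := hf0 x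
            simp only [ContinuousMap.smul_apply, smul_eq_mul]
            positivity
          · intro x hx
            have hfx : c⁻¹ ≤ f x := hx
            simp only [ContinuousMap.smul_apply, smul_eq_mul]
            calc (1:ℝ) = c * c⁻¹ := by rw [mul_inv_cancel₀ (ne_of_gt hc0)]
              _ ≤ c * f x := by apply mul_le_mul_of_nonneg_left hfx (le_of_lt hc0)
        rwa [hL.smul] at this
      have hLf : L f < rc L K + εr/4 := hfr
      have hrcK : rc L K ≤ 1 := rc_le_one hL K
      have hrcK0 : 0 ≤ rc L K := rc_nonneg hL K
      have hLf0 : 0 ≤ L f := hL.nonneg hf0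
      have hfinal : rc L K' ≤ rc L K + εr := by
        calc rc L K' ≤ c * L f := hrc
          _ ≤ (1 + εr/4) * (rc L K + εr/4) := by
              apply mul_le_mul (le_refl c) (le_of_lt hLf) hLf0 (by linarith)
          _ = rc L K + εr/4 + (εr/4) * (rc L K + εr/4) := by ring
          _ ≤ rc L K + εr/4 + (εr/4) * 2 := by nlinarith
          _ ≤ rc L K + εr := by linarith
      -- move to ℝ≥0∞
      have h2 : ((rc L K').toNNReal : ℝ≥0∞) ≤ ((rc L K).toNNReal : ℝ≥0∞) + (εr.toNNReal : ℝ≥0∞) := by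
        rw [← ENNReal.coe_add, ENNReal.coe_le_coe, ← Real.toNNReal_add hrcK0 (le_of_lt hεr0)]
        exact Real.toNNReal_mono hfinal
      refine h2.trans (add_le_add le_rfl ?_)
      rw [ENNReal.coe_le_coe]
      calc εr.toNNReal ≤ ((ε:ℝ)).toNNReal := Real.toNNReal_mono (min_le_left _ _)
        _ = ε := Real.toNNReal_coe


section Meas
variable [MeasurableSpace X] [BorelSpace X]

/-- The measure associated to a positive normalized functional. -/
noncomputable def LMeasure (L : C(X, ℝ) → ℝ) (hL : IsPosFunctional L) : Measure X :=
  (LContent L hL).measure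

lemma LMeasure_compacts (L : C(X, ℝ) → ℝ) (hL : IsPosFunctional L) (K : Compacts X) :
    LMeasure L hL K = ((rc L (K : Set X)).toNNReal : ℝ≥0∞) :=
  Content.measure_eq_content_of_regular (LContent L hL) (LContent_regular L hL) K

lemma LMeasure_prob (L : C(X, ℝ) → ℝ) (hL : IsPosFunctional L) :
    IsProbabilityMeasure (LMeasure L hL) := by
  constructor
  have := LMeasure_compacts L hL ⊤
  rw [Compacts.coe_top] at this
  rw [this, rc_univ hL]
  norm_num

lemma LMeasure_invariant (L : C(X, ℝ) → ℝ) (hL : IsPosFunctional L) (e : X ≃ₜ X)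
    (hLe : ∀ f : C(X, ℝ), L (f.comp (e : C(X, X))) = L f) :
    Measure.map e (LMeasure L hL) = LMeasure L hL := by
  have hadm : ∀ K : Compacts X, adm L ((K.map e e.continuous : Compacts X) : Set X)
      = adm L (K : Set X) := by
    intro K
    have hco : ((K.map e e.continuous : Compacts X) : Set X) = e '' (K : Set X) :=
      rfl
    rw [hco]
    ext r
    constructor
    · rintro ⟨g, hg0, hg1, rfl⟩
      refine ⟨g.comp (e : C(X, X)), fun x => hg0 (e x), fun x hx => ?_, (hLe g).symm⟩
      exact hg1 (e x) ⟨x, hx, rfl⟩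
    · rintro ⟨f, hf0, hf1, rfl⟩
      refine ⟨f.comp (e.symm : C(X, X)), fun y => hf0 (e.symm y), ?_, ?_⟩
      · rintro y ⟨x, hx, rfl⟩
        simpa [Homeomorph.symm_apply_apply] using hf1 x hx
      · have := hLe (f.comp (e.symm : C(X, X)))
        have heq : (f.comp (e.symm : C(X, X))).comp (e : C(X, X)) = f := by
          ext x; simp
        rw [heq] at this
        exact this
  have hcontent : ∀ K : Compacts X,
      (LContent L hL) (K.map e e.continuous) = (LContent L hL) K := by
    intro K
    show (((rc L _).toNNReal : ℝ≥0) : ℝ≥0∞) = (((rc L _).toNNReal : ℝ≥0) : ℝ≥0∞)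
    rw [show rc L ((K.map e e.continuous : Compacts X) : Set X) = rc L (K : Set X) by
      unfold rc; rw [hadm K]]
  have houter := Content.outerMeasure_preimage (LContent L hL) e hcontent
  apply Measure.ext
  intro s hs
  rw [Measure.map_apply e.continuous.measurable hs]
  unfold LMeasure
  rw [Content.measure_apply _ (e.continuous.measurable hs), Content.measure_apply _ hs]
  exact houter s

lemma LMeasure_compact_ge (L : C(X, ℝ) → ℝ) (hL : IsPosFunctional L) {A : Set X}
    (hA : IsClosed A) {c : ℝ}
    (hc : ∀ f : C(X, ℝ), (∀ x, 0 ≤ f x) → (∀ x ∈ A, 1 ≤ f x) → c ≤ L f) :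
    c ≤ (LMeasure L hL A).toReal := by
  have := LMeasure_compacts L hL ⟨A, hA.isCompact⟩
  simp only [Compacts.coe_mk] at this
  rw [this]
  have h1 : c ≤ rc L A := le_rc c hc
  have h2 : rc L A ≤ (rc L A).toNNReal := Real.le_coe_toNNReal _
  simpa using h1.trans h2

end Meas
end UBDAux

section Dyn
open Filter Topology

variable {Γ X : Type*} [Group Γ] [DecidableEq Γ] [MulAction Γ X]
  [TopologicalSpace X] [CompactSpace X] [T2Space X]

open UBDAux in
lemma exists_functional [Nonempty X] (hact : ∀ γ : Γ, Continuous fun x : X => γ • x)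
    {F : ℕ → Finset Γ} (hF : IsFolnerSeqGroup F) (A : Set X) :
    ∃ L : C(X, ℝ) → ℝ, IsPosFunctional L ∧
      (∀ γ : Γ, ∀ f : C(X, ℝ), L (f.comp ⟨fun x => γ • x, hact γ⟩) = L f) ∧
      (∀ f : C(X, ℝ), (∀ x, 0 ≤ f x) → (∀ x ∈ A, 1 ≤ f x) →
        upperBanachDensity Γ A ≤ L f) := by
  obtain ⟨hFne, hFol⟩ := hF
  -- choose near-optimal points
  have hx : ∀ n : ℕ, ∃ y : X,
      (⨆ z : X, orbitAvg (F n) A z) - 1/(n+1) < orbitAvg (F n) A y := by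
    intro n
    apply exists_lt_of_lt_ciSup
    have : (0:ℝ) < 1/(n+1) := by positivity
    linarith
  choose x hxs using hx
  set U : Ultrafilter ℕ := Ultrafilter.of Filter.atTop with hUdef
  have hU : (U : Filter ℕ) ≤ Filter.atTop := Ultrafilter.of_le _
  set avg : ℕ → C(X, ℝ) → ℝ :=
    fun n f => ((F n).card : ℝ)⁻¹ * (F n).sum (fun s => f (s • x n)) with havg
  have hcard : ∀ n, (0:ℝ) < (F n).card := by
    intro n; exact_mod_cast Finset.card_pos.2 (hFne n)
  have hbound : ∀ n (f : C(X, ℝ)), |avg n f| ≤ ‖f‖ := by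
    intro n f
    rw [havg]
    simp only
    rw [abs_mul, abs_inv, Nat.abs_cast]
    rw [inv_mul_le_iff₀ (hcard n)]
    calc |(F n).sum fun s => f (s • x n)| ≤ (F n).sum (fun s => |f (s • x n)|) :=
          Finset.abs_sum_le_sum_abs _ _
      _ ≤ (F n).sum (fun _ => ‖f‖) := by
          apply Finset.sum_le_sum
          intro s _
          exact f.norm_coe_le_norm (s • x n)
      _ = ((F n).card : ℝ) * ‖f‖ := by rw [Finset.sum_const, nsmul_eq_mul]
  have hconv : ∀ f : C(X, ℝ), ∃ a : ℝ, Tendsto (fun n => avg n f) (U : Filter ℕ) (𝓝 a) := by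
    intro f
    have hmem : (U.map (fun n => avg n f) : Filter ℝ) ≤ Filter.principal (Set.Icc (-‖f‖) ‖f‖) := by
      rw [Ultrafilter.coe_map, Filter.le_principal_iff]
      apply Filter.mem_map.2
      apply Filter.univ_mem'
      intro n
      exact abs_le.1 (hbound n f)
    obtain ⟨a, _, ha⟩ := isCompact_Icc.ultrafilter_le_nhds (U.map (fun n => avg n f)) hmem
    exact ⟨a, by rwa [Ultrafilter.coe_map] at ha⟩
  set L : C(X, ℝ) → ℝ := fun f => (hconv f).choose with hLdef
  have hLt : ∀ f : C(X, ℝ), Tendsto (fun n => avg n f) (U : Filter ℕ) (𝓝 (L f)) :=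
    fun f => (hconv f).choose_spec
  have hmono : ∀ f g : C(X, ℝ), (∀ y, f y ≤ g y) → L f ≤ L g := by
    intro f g h
    apply le_of_tendsto_of_tendsto' (hLt f) (hLt g)
    intro n
    apply mul_le_mul_of_nonneg_left _ (inv_nonneg.2 (le_of_lt (hcard n)))
    exact Finset.sum_le_sum (fun s _ => h (s • x n))
  have hpos : IsPosFunctional L := by
    constructor
    · intro f g
      apply tendsto_nhds_unique (hLt (f + g))
      have : (fun n => avg n (f + g)) = fun n => avg n f + avg n g := by
        funext n
        rw [havg]
        simp only [ContinuousMap.add_apply]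
        rw [Finset.sum_add_distrib, mul_add]
      rw [this]
      exact (hLt f).add (hLt g)
    · intro c f
      apply tendsto_nhds_unique (hLt (c • f))
      have : (fun n => avg n (c • f)) = fun n => c * avg n f := by
        funext n
        rw [havg]
        simp only [ContinuousMap.smul_apply, smul_eq_mul]
        rw [← Finset.mul_sum]
        ring
      rw [this]
      exact (hLt f).const_mul c
    · exact hmono
    · apply tendsto_nhds_unique (hLt 1)
      have : (fun n => avg n (1 : C(X, ℝ))) = fun _ => (1:ℝ) := by
        funext n
        rw [havg]
        simp only [ContinuousMap.one_apply]
        rw [Finset.sum_const, nsmul_eq_mul, mul_one]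
        exact inv_mul_cancel₀ (ne_of_gt (hcard n))
      rw [this]
      exact tendsto_const_nhds
  refine ⟨L, hpos, ?_, ?_⟩
  · -- invariance
    intro γ f
    set g : C(X, ℝ) := f.comp ⟨fun x => γ • x, hact γ⟩ with hg
    -- pointwise bound
    have hkey : ∀ n, |avg n g - avg n f| ≤
        ‖f‖ * (((symmDiff ((F n).image (fun s => γ * s)) (F n)).card : ℝ) / ((F n).card : ℝ)) := by
      intro n
      set G : Finset Γ := (F n).image (fun s => γ * s) with hG
      have h1 : avg n g = ((F n).card : ℝ)⁻¹ * G.sum (fun t => f (t • x n)) := by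
        rw [havg, hg]
        simp only [ContinuousMap.comp_apply, ContinuousMap.coe_mk]
        congr 1
        rw [hG, Finset.sum_image (by intro a _ b _ h; exact mul_left_cancel h)]
        apply Finset.sum_congr rfl
        intro s _
        rw [mul_smul]
      have h2 : G.sum (fun t => f (t • x n)) - (F n).sum (fun t => f (t • x n))
          = (G \ F n).sum (fun t => f (t • x n)) - (F n \ G).sum (fun t => f (t • x n)) := by
        have e1 : G.sum (fun t => f (t • x n))
            = (G ∩ F n).sum (fun t => f (t • x n)) + (G \ F n).sum (fun t => f (t • x n)) :=
          (Finset.sum_inter_add_sum_sdiff _ _ _).symm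
        have e2 : (F n).sum (fun t => f (t • x n))
            = (F n ∩ G).sum (fun t => f (t • x n)) + (F n \ G).sum (fun t => f (t • x n)) :=
          (Finset.sum_inter_add_sum_sdiff _ _ _).symm
        rw [e1, e2, Finset.inter_comm]
        ring
      have h3 : |G.sum (fun t => f (t • x n)) - (F n).sum (fun t => f (t • x n))|
          ≤ ((symmDiff G (F n)).card : ℝ) * ‖f‖ := by
        rw [h2]
        have hdisj : Disjoint (G \ F n) (F n \ G) := disjoint_sdiff_sdiff
        have hsymm : symmDiff G (F n) = (G \ F n) ∪ (F n \ G) := rfl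
        calc |(G \ F n).sum (fun t => f (t • x n)) - (F n \ G).sum (fun t => f (t • x n))|
            ≤ |(G \ F n).sum (fun t => f (t • x n))| + |(F n \ G).sum (fun t => f (t • x n))| :=
              abs_sub _ _
          _ ≤ (G \ F n).sum (fun t => |f (t • x n)|)
              + (F n \ G).sum (fun t => |f (t • x n)|) :=
              add_le_add (Finset.abs_sum_le_sum_abs _ _) (Finset.abs_sum_le_sum_abs _ _)
          _ = (symmDiff G (F n)).sum (fun t => |f (t • x n)|) := by
              rw [hsymm, Finset.sum_union hdisj]
          _ ≤ (symmDiff G (F n)).sum (fun _ => ‖f‖) := by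
              apply Finset.sum_le_sum
              intro t _
              exact f.norm_coe_le_norm (t • x n)
          _ = ((symmDiff G (F n)).card : ℝ) * ‖f‖ := by
              rw [Finset.sum_const, nsmul_eq_mul]
      rw [h1, havg]
      simp only
      rw [← mul_sub, abs_mul, abs_inv, Nat.abs_cast]
      calc (((F n).card : ℝ))⁻¹ * |G.sum (fun t => f (t • x n)) - (F n).sum (fun t => f (t • x n))|
          ≤ (((F n).card : ℝ))⁻¹ * (((symmDiff G (F n)).card : ℝ) * ‖f‖) := by
            apply mul_le_mul_of_nonneg_left h3 (inv_nonneg.2 (le_of_lt (hcard n)))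
        _ = ‖f‖ * (((symmDiff G (F n)).card : ℝ) / ((F n).card : ℝ)) := by
            field_simp
    have hzero : Tendsto (fun n => avg n g - avg n f) (U : Filter ℕ) (𝓝 0) := by
      apply squeeze_zero_norm hkey
      apply Tendsto.mono_left _ hU
      have := (hFol γ).const_mul ‖f‖
      simpa using this
    have : Tendsto (fun n => avg n g) (U : Filter ℕ) (𝓝 (L f)) := by
      have h := (hLt f).add hzero
      simp only [add_zero] at h
      have heq : (fun n => avg n f + (avg n g - avg n f)) = fun n => avg n g := by
        funext n; ring
      rwa [heq] at h
    exact tendsto_nhds_unique (hLt g) this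
  · -- density bound
    intro f hf0 hf1
    have hptwise : ∀ n, upperBanachDensity Γ A - 1/(n+1) ≤ avg n f := by
      intro n
      have hD : upperBanachDensity Γ A ≤ ⨆ z : X, orbitAvg (F n) A z := by
        apply csInf_le
        · exact ⟨0, by rintro v ⟨Fv, hFv, rfl⟩; exact iSup_orbitAvg_nonneg Fv A⟩
        · exact ⟨F n, hFne n, rfl⟩
      have h2 : orbitAvg (F n) A (x n) ≤ avg n f := by
        classical
        rw [havg]
        unfold orbitAvg
        apply mul_le_mul_of_nonneg_left _ (inv_nonneg.2 (le_of_lt (hcard n)))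
        apply Finset.sum_le_sum
        intro s _
        by_cases h : s • x n ∈ A
        · simp only [h, if_true]
          exact hf1 _ h
        · simp only [h, if_false]
          exact hf0 _
      have := hxs n
      linarith
    apply le_of_tendsto_of_tendsto' _ (hLt f) hptwise
    apply Tendsto.mono_left _ hU
    have h0 : Tendsto (fun n : ℕ => 1/((n:ℝ)+1)) Filter.atTop (𝓝 0) :=
      tendsto_one_div_add_atTop_nhds_zero_nat
    have := Filter.Tendsto.sub
      (tendsto_const_nhds (α := ℕ) (f := Filter.atTop) (x := upperBanachDensity Γ A)) h0
    simpa using this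
end Dyn

section Final
open Filter Topology UBDAux

variable {Γ X : Type*} [Group Γ] [DecidableEq Γ] [MulAction Γ X]
  [TopologicalSpace X] [CompactSpace X] [T2Space X] [MeasurableSpace X] [BorelSpace X]

lemma exists_good_measure [Nonempty X] (hact : ∀ γ : Γ, Continuous fun x : X => γ • x)
    (hamen : ∃ F : ℕ → Finset Γ, IsFolnerSeqGroup F) {A : Set X} (hA : IsClosed A) :
    ∃ μ : Measure X, IsInvariantProbMeasure Γ μ ∧
      upperBanachDensity Γ A ≤ (μ A).toReal := by
  obtain ⟨F, hF⟩ := hamen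
  obtain ⟨L, hpos, hinv, hdens⟩ := exists_functional hact hF A
  haveI : ContinuousConstSMul Γ X := ⟨hact⟩
  refine ⟨LMeasure L hpos, ⟨LMeasure_prob L hpos, ?_⟩, ?_⟩
  · intro γ
    have he : ∀ f : C(X, ℝ), L (f.comp ((Homeomorph.smul γ (α := X)) : C(X, X))) = L f := by
      intro f
      have : ((Homeomorph.smul γ (α := X)) : C(X, X))
          = (⟨fun x => γ • x, hact γ⟩ : C(X, X)) := rfl
      rw [this]
      exact hinv γ f
    have := LMeasure_invariant L hpos (Homeomorph.smul γ (α := X)) he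
    exact this
  · exact LMeasure_compact_ge L hpos hA hdens

theorem upperBanachDensity_eq_sup_invariant_measure_of_amenable'
    (hact : ∀ γ : Γ, Continuous fun x : X => γ • x)
    (hamen : ∃ F : ℕ → Finset Γ, IsFolnerSeqGroup F)
    (A : Set X) (hA : IsClosed A) :
    upperBanachDensity Γ A
      = sSup {t : ℝ | ∃ μ : MeasureTheory.Measure X,
          IsInvariantProbMeasure Γ μ ∧ t = (μ A).toReal} := by
  rcases isEmpty_or_nonempty X with hX | hX
  · -- empty space: both sides are 0
    have h1 : upperBanachDensity Γ A = 0 := by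
      unfold upperBanachDensity
      have : {v : ℝ | ∃ F : Finset Γ, F.Nonempty ∧ v = ⨆ x : X, orbitAvg F A x} = {0} := by
        ext v
        constructor
        · rintro ⟨F, hF, rfl⟩
          simp [Real.iSup_of_isEmpty]
        · rintro rfl
          exact ⟨{1}, Finset.singleton_nonempty 1, by simp [Real.iSup_of_isEmpty]⟩
      rw [this, csInf_singleton]
    have h2 : {t : ℝ | ∃ μ : MeasureTheory.Measure X,
        IsInvariantProbMeasure Γ μ ∧ t = (μ A).toReal} = ∅ := by
      rw [Set.eq_empty_iff_forall_notMem]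
      rintro t ⟨μ, ⟨hp, _⟩, rfl⟩
      have := hp.measure_univ
      rw [Set.univ_eq_empty_iff.2 hX] at this
      simp at this
    rw [h1, h2, Real.sSup_empty]
  · obtain ⟨μ, hμ, hle⟩ := exists_good_measure hact hamen hA
    set S := {t : ℝ | ∃ μ : MeasureTheory.Measure X,
        IsInvariantProbMeasure Γ μ ∧ t = (μ A).toReal} with hS
    have hSmem : (μ A).toReal ∈ S := ⟨μ, hμ, rfl⟩
    have hSbdd : BddAbove S := by
      refine ⟨1, ?_⟩
      rintro t ⟨ν, ⟨hp, _⟩, rfl⟩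
      haveI := hp
      calc (ν A).toReal ≤ (1 : ENNReal).toReal :=
            ENNReal.toReal_mono ENNReal.one_ne_top prob_le_one
        _ = 1 := by simp
    apply le_antisymm
    · exact hle.trans (le_csSup hSbdd hSmem)
    · apply csSup_le ⟨_, hSmem⟩
      rintro t ⟨ν, hν, rfl⟩
      unfold upperBanachDensity
      have hne : {v : ℝ | ∃ F : Finset Γ, F.Nonempty ∧ v = ⨆ x : X, orbitAvg F A x}.Nonempty :=
        ⟨⨆ x : X, orbitAvg ({1} : Finset Γ) A x, ⟨{1}, Finset.singleton_nonempty 1, rfl⟩⟩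
      refine le_csInf hne ?_
      rintro v ⟨Fv, hFv, rfl⟩
      exact measure_le_iSup_orbitAvg hact hν hA hFv
end Final

/-- for a continuous action of a countable discrete amenable group
on a compact Hausdorff space and a closed set `A`, the upper Banach density of
`A` equals `sup {μ(A) : μ ∈ M_Γ(X)}`. -/
theorem upperBanachDensity_eq_sup_invariant_measure_of_amenable
    {Γ X : Type*} [Group Γ] [Countable Γ] [DecidableEq Γ]
    [TopologicalSpace X] [CompactSpace X] [T2Space X]
    [MeasurableSpace X] [BorelSpace X] [MulAction Γ X]
    (hact : ∀ γ : Γ, Continuous fun x : X => γ • x)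
    (hamen : ∃ F : ℕ → Finset Γ, IsFolnerSeqGroup F)
    (A : Set X) (hA : IsClosed A) :
    upperBanachDensity Γ A
      = sSup {t : ℝ | ∃ μ : Measure X, IsInvariantProbMeasure Γ μ ∧ t = (μ A).toReal} := by
  exact upperBanachDensity_eq_sup_invariant_measure_of_amenable' hact hamen A hA
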